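/- Let n ≥ 2, 0 ≤ p ≤ q and u ∈ ℂ^n. With β_j = ((−1)^j·(n−1+p+q)/j!)·(n−2+p+q−j)!/(n−1+p+q)! for 0 ≤ j ≤ p, the harmonic projection of the bihomogeneous kernel gives the Koornwinder kernel: (n)_{p+q}·∑_{j=0}^{p} β_j·‖z‖^{2j}·Δ_z^j(⟨z,ū⟩^p·⟨z̄,u⟩^q/(p!·q!)) = K_{p,q}(z,u) as polynomials in the z- and z̄-variables. -/

import Mathlib

open MvPolynomial

noncomputable section

/-- The complex Laplacian `Δ_z = ∑_j ∂_{z̄_j} ∂_{z_j}`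
(variables `Sum.inl j = z_j`, `Sum.inr j = z̄_j`). -/
def clap (n : ℕ) (P : MvPolynomial (Fin n ⊕ Fin n) ℂ) : MvPolynomial (Fin n ⊕ Fin n) ℂ :=
  ∑ j : Fin n, pderiv (Sum.inr j) (pderiv (Sum.inl j) P)

/-- The Pochhammer symbol `(a)_k = a (a+1) ⋯ (a+k-1)`. -/
def poch (a : ℂ) (k : ℕ) : ℂ := ∏ i ∈ Finset.range k, (a + i)

/-- The polynomial `⟨z,ū⟩ = ∑_j conj(u_j) z_j`. -/
def Apoly (n : ℕ) (u : Fin n → ℂ) : MvPolynomial (Fin n ⊕ Fin n) ℂ :=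
  ∑ j : Fin n, C ((starRingEnd ℂ) (u j)) * X (Sum.inl j)

/-- The polynomial `⟨z̄,u⟩ = ∑_j u_j z̄_j`. -/
def Bpoly (n : ℕ) (u : Fin n → ℂ) : MvPolynomial (Fin n ⊕ Fin n) ℂ :=
  ∑ j : Fin n, C (u j) * X (Sum.inr j)

/-- The polynomial `‖z‖² = ∑_j z_j z̄_j`. -/
def r2poly (n : ℕ) : MvPolynomial (Fin n ⊕ Fin n) ℂ :=
  ∑ j : Fin n, X (Sum.inl j) * X (Sum.inr j)

/-- `‖u‖² = ∑_j |u_j|²` as a complex scalar. -/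
def u2 (n : ℕ) (u : Fin n → ℂ) : ℂ := ∑ j : Fin n, u j * (starRingEnd ℂ) (u j)

/-- The Koornwinder reproducing kernel `K_{p,q}(z,u)` as a polynomial in `z, z̄`. -/
def koorn (n p q : ℕ) (u : Fin n → ℂ) : MvPolynomial (Fin n ⊕ Fin n) ℂ :=
  C ((((n - 1 + p + q : ℕ) : ℂ) / ((n - 1 : ℕ) : ℂ)) * (((q + n - 2).choose q : ℕ) : ℂ)) *
    Bpoly n u ^ (q - p) *
    ∑ j ∈ Finset.range (p + 1),
      C ((((p + n - 2).choose (p - j) : ℕ) : ℂ) * ((q.choose j : ℕ) : ℂ)) *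
        (Apoly n u * Bpoly n u - r2poly n * C (u2 n u)) ^ j *
        (Apoly n u * Bpoly n u) ^ (p - j)

/-- The coefficients `β_j = ((−1)^j (n−1+p+q)/j!) (n−2+p+q−j)!/(n−1+p+q)!`. -/
def betaCoeff (n p q j : ℕ) : ℂ :=
  ((-1 : ℂ) ^ j * ((n - 1 + p + q : ℕ) : ℂ) / (j.factorial : ℂ)) *
    (((n - 2 + p + q - j).factorial : ℕ) : ℂ) / (((n - 1 + p + q).factorial : ℕ) : ℂ)

/-! ### Auxiliary lemmas -/

lemma vand (n p q k : ℕ) (hn : 2 ≤ n) (hk : k ≤ p) (hpq : p ≤ q) :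
    ∑ j ∈ Finset.Ico k (p+1), (p+n-2).choose (p-j) * q.choose j * j.choose k
      = q.choose k * (p+q+n-2-k).choose (p-k) := by
  have h1 : ∀ j ∈ Finset.Ico k (p+1), (p+n-2).choose (p-j) * q.choose j * j.choose k
      = q.choose k * ((q-k).choose (j-k) * (p+n-2).choose (p-j)) := by
    intro j hj
    rw [Finset.mem_Ico] at hj
    have h := Nat.choose_mul (n := q) (k := j) (s := k) hj.1
    rw [mul_assoc, h]
    ring
  rw [Finset.sum_congr rfl h1, ← Finset.mul_sum]
  congr 1
  rw [Finset.sum_Ico_eq_sum_range]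
  have h2 : p+q+n-2-k = (q-k) + (p+n-2) := by omega
  rw [h2, Nat.add_choose_eq,
    Finset.Nat.sum_antidiagonal_eq_sum_range_succ (fun a b => (q-k).choose a * (p+n-2).choose b)]
  have h3 : p + 1 - k = (p - k) + 1 := by omega
  rw [h3]
  apply Finset.sum_congr rfl
  intro m hm
  rw [Finset.mem_range] at hm
  congr 1
  · congr 1; omega
  · congr 1; omega

lemma fact_poch (a : ℕ) (m : ℕ) :
    ((a.factorial : ℕ) : ℂ) * poch ((a + 1 : ℕ) : ℂ) m = (((a + m).factorial : ℕ) : ℂ) := by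
  induction m with
  | zero => simp [poch]
  | succ m ih =>
      rw [poch, Finset.prod_range_succ, ← mul_assoc]
      rw [poch] at ih
      rw [ih]
      have : a + (m+1) = (a + m) + 1 := by omega
      rw [this, Nat.factorial_succ]
      push_cast
      ring

lemma Fne (m : ℕ) : ((m.factorial : ℕ) : ℂ) ≠ 0 := by
  exact_mod_cast Nat.factorial_ne_zero m

lemma hdf (a b : ℕ) (hba : b ≤ a) : ((a.descFactorial b : ℕ) : ℂ)
    = ((a.factorial : ℕ) : ℂ) / (((a-b).factorial : ℕ) : ℂ) := by
  rw [eq_div_iff (Fne _)]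
  exact_mod_cast congrArg (Nat.cast (R := ℂ))
    ((mul_comm _ _).trans (Nat.factorial_mul_descFactorial hba))

set_option maxHeartbeats 1000000 in
lemma key (n p q k : ℕ) (hn : 2 ≤ n) (hk : k ≤ p) (hpq : p ≤ q) :
    poch (n : ℂ) (p + q) * betaCoeff n p q k *
        (((p.factorial : ℂ) * (q.factorial : ℂ))⁻¹) *
        ((p.descFactorial k : ℕ) : ℂ) * ((q.descFactorial k : ℕ) : ℂ)
      = ((((n - 1 + p + q : ℕ) : ℂ) / ((n - 1 : ℕ) : ℂ)) * (((q + n - 2).choose q : ℕ) : ℂ)) *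
        ((-1 : ℂ)^k * (((q.choose k * (p+q+n-2-k).choose (p-k) : ℕ)) : ℂ)) := by
  obtain ⟨s, rfl⟩ : ∃ s, n = s + 2 := ⟨n - 2, by omega⟩
  obtain ⟨d, rfl⟩ : ∃ d, p = k + d := ⟨p - k, by omega⟩
  obtain ⟨e, rfl⟩ : ∃ e, q = k + d + e := ⟨q - (k+d), by omega⟩
  have hpoch : poch ((s + 2 : ℕ) : ℂ) (k + d + (k + d + e))
      = (((s + 1 + (k + d) + (k + d + e)).factorial : ℕ) : ℂ) / (((s+1).factorial : ℕ) : ℂ) := by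
    have h := fact_poch (s+1) (k + d + (k + d + e))
    have h1 : (s + 1) + 1 = s + 2 := by omega
    have h2 : (s + 1) + (k + d + (k + d + e)) = s + 1 + (k + d) + (k + d + e) := by omega
    rw [h1, h2] at h
    rw [eq_div_iff (Fne _), mul_comm]
    exact h
  rw [betaCoeff, hpoch]
  have e1 : s + 2 - 1 + (k + d) + (k + d + e) = s + 1 + (k + d) + (k + d + e) := by omega
  have e2 : s + 2 - 2 + (k + d) + (k + d + e) - k = s + k + d + d + e := by omega
  have e3 : (k + d) + (k + d + e) + (s + 2) - 2 - k = s + k + d + d + e := by omega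
  have e4 : (k + d) - k = d := by omega
  have e6 : (k + d + e) + (s + 2) - 2 = s + k + d + e := by omega
  have e7 : s + 2 - 1 = s + 1 := by omega
  simp only [e1, e2, e3, e4, e6, e7]
  rw [Nat.cast_mul, Nat.cast_choose ℂ (show k ≤ k+d+e by omega),
    Nat.cast_choose ℂ (show k+d+e ≤ s+k+d+e by omega),
    Nat.cast_choose ℂ (show d ≤ s+k+d+d+e by omega),
    hdf (k+d) k (by omega), hdf (k+d+e) k (by omega)]
  have e8 : s + k + d + d + e - d = s + k + d + e := by omega
  have e9 : k + d + e - k = d + e := by omega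
  have e10 : s + k + d + e - (k + d + e) = s := by omega
  simp only [e8, e9, e10, e4]
  have e12 : (s + 1).factorial = (s + 1) * s.factorial := Nat.factorial_succ s
  have hs1 : ((s + 1 : ℕ) : ℂ) ≠ 0 := by exact_mod_cast Nat.succ_ne_zero s
  rw [e12, Nat.cast_mul]
  set A2 := ((s + 1 + (k + d) + (k + d + e) : ℕ) : ℂ) with hA2
  set A11 := ((s + 1 : ℕ) : ℂ) with hA11
  clear_value A2 A11
  field_simp [Fne]
  rw [div_eq_iff]
  · rw [div_mul_eq_mul_div, eq_div_iff (by simp [Fne, Nat.factorial_ne_zero])]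
    ring
  · repeat' apply mul_ne_zero
    all_goals first | exact Fne _ | exact hs1

lemma pdA (n : ℕ) (u : Fin n → ℂ) (j : Fin n) :
    pderiv (Sum.inl j) (Apoly n u) = C ((starRingEnd ℂ) (u j)) := by
  simp [Apoly, pderiv_X, Pi.single_apply]
lemma pdA' (n : ℕ) (u : Fin n → ℂ) (j : Fin n) :
    pderiv (Sum.inr j) (Apoly n u) = 0 := by
  simp [Apoly, pderiv_X, Pi.single_apply]
lemma pdB (n : ℕ) (u : Fin n → ℂ) (j : Fin n) :
    pderiv (Sum.inl j) (Bpoly n u) = 0 := by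
  simp [Bpoly, pderiv_X, Pi.single_apply]
lemma pdB' (n : ℕ) (u : Fin n → ℂ) (j : Fin n) :
    pderiv (Sum.inr j) (Bpoly n u) = C (u j) := by
  simp [Bpoly, pderiv_X, Pi.single_apply]

lemma clap_step (n : ℕ) (u : Fin n → ℂ) (s : ℂ) (a b : ℕ) :
    clap n (C s * Apoly n u ^ (a+1) * Bpoly n u ^ (b+1))
      = C (s * (a+1) * (b+1) * u2 n u) * Apoly n u ^ a * Bpoly n u ^ b := by
  have h : ∀ j : Fin n, pderiv (Sum.inr j) (pderiv (Sum.inl j)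
      (C s * Apoly n u ^ (a+1) * Bpoly n u ^ (b+1)))
      = C (s * (a+1) * (b+1) * (u j * (starRingEnd ℂ) (u j))) * Apoly n u ^ a * Bpoly n u ^ b := by
    intro j
    simp [pderiv_mul, pderiv_pow, pdA, pdA', pdB, pdB']
    ring
  rw [clap]
  simp only [h]
  rw [u2, ← Finset.sum_mul, ← Finset.sum_mul, ← map_sum, ← Finset.mul_sum]

lemma clap_iter (n : ℕ) (u : Fin n → ℂ) (s : ℂ) (p q : ℕ) (hpq : p ≤ q) :
    ∀ j ≤ p, (clap n)^[j] (C s * Apoly n u ^ p * Bpoly n u ^ q)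
      = C (s * (p.descFactorial j : ℂ) * (q.descFactorial j : ℂ) * (u2 n u)^j) *
          Apoly n u ^ (p-j) * Bpoly n u ^ (q-j) := by
  intro j
  induction j with
  | zero => intro _; simp
  | succ j ih =>
      intro hj
      rw [Function.iterate_succ_apply', ih (by omega)]
      have h1 : p - j = (p - (j+1)) + 1 := by omega
      have h2 : q - j = (q - (j+1)) + 1 := by omega
      rw [h1, h2, clap_step]
      have hx : s * (p.descFactorial j : ℂ) * (q.descFactorial j : ℂ) * (u2 n u)^j *
            (((p - (j+1) : ℕ) : ℂ) + 1) * (((q - (j+1) : ℕ) : ℂ) + 1) * u2 n u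
          = s * (p.descFactorial (j+1) : ℂ) * (q.descFactorial (j+1) : ℂ) * (u2 n u)^(j+1) := by
        rw [Nat.descFactorial_succ, Nat.descFactorial_succ, h1, h2]
        push_cast
        ring
      rw [hx]

lemma term_eq (n : ℕ) (u : Fin n → ℂ) (a dj c : ℂ) (p q j k : ℕ)
    (hk : k ≤ j) (hj : j ≤ p) (hpq : p ≤ q) :
    C a * Bpoly n u ^ (q-p) *
        (C dj * ((-1 : MvPolynomial (Fin n ⊕ Fin n) ℂ)^((j-k)+j) *
            (Apoly n u * Bpoly n u)^(j-k) * (r2poly n * C c)^(j-(j-k)) *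
            ((j.choose (j-k) : ℕ) : MvPolynomial (Fin n ⊕ Fin n) ℂ)) *
          (Apoly n u * Bpoly n u)^(p-j))
      = C (a * (dj * ((-1:ℂ)^k * ((j.choose k : ℕ) : ℂ) * c^k))) *
          (r2poly n ^ k * (Apoly n u ^ (p-k) * Bpoly n u ^ (q-k))) := by
  obtain ⟨m, rfl⟩ : ∃ m, j = k + m := ⟨j - k, by omega⟩
  obtain ⟨r, rfl⟩ : ∃ r, p = k + m + r := ⟨p - (k+m), by omega⟩
  obtain ⟨t, rfl⟩ : ∃ t, q = k + m + r + t := ⟨q - (k+m+r), by omega⟩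
  have e1 : (k + m) - k = m := by omega
  have e2 : (k + m) - m = k := by omega
  have e3 : (k + m + r) - (k + m) = r := by omega
  have e4 : (k + m + r + t) - (k + m + r) = t := by omega
  have e5 : (k + m + r) - k = m + r := by omega
  have e6 : (k + m + r + t) - k = m + r + t := by omega
  have e7 : m + (k + m) = k + 2*m := by omega
  rw [e1, e2, e3, e4, e5, e6, e7]
  have hch : (k+m).choose m = (k+m).choose k := by
    rw [← Nat.choose_symm (Nat.le_add_right k m)]
    congr 1
    omega
  rw [hch]
  rw [pow_add, pow_mul, neg_one_sq, one_pow, mul_one]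
  have hc : ((((k+m).choose k : ℕ)) : MvPolynomial (Fin n ⊕ Fin n) ℂ)
      = C (((k+m).choose k : ℕ) : ℂ) := (map_natCast C _).symm
  rw [hc]
  have hn1 : (-1 : MvPolynomial (Fin n ⊕ Fin n) ℂ)^k = C ((-1 : ℂ)^k) := by
    rw [map_pow, map_neg, map_one]
  rw [hn1]
  simp only [map_mul, map_pow]
  ring

theorem statement5 (n p q : ℕ) (hn : 2 ≤ n) (hpq : p ≤ q) (u : Fin n → ℂ) :
    C (poch (n : ℂ) (p + q)) *
      ∑ j ∈ Finset.range (p + 1),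
        C (betaCoeff n p q j) * r2poly n ^ j *
          (clap n)^[j]
            (C (((p.factorial : ℂ) * (q.factorial : ℂ))⁻¹) * Apoly n u ^ p * Bpoly n u ^ q)
    = koorn n p q u := by
  have hL : C (poch (n : ℂ) (p + q)) *
      (∑ j ∈ Finset.range (p + 1),
        C (betaCoeff n p q j) * r2poly n ^ j *
          (clap n)^[j]
            (C (((p.factorial : ℂ) * (q.factorial : ℂ))⁻¹) * Apoly n u ^ p * Bpoly n u ^ q))
      = ∑ k ∈ Finset.range (p+1),
          C (poch (n : ℂ) (p + q) * betaCoeff n p q k *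
              (((p.factorial : ℂ) * (q.factorial : ℂ))⁻¹ * ((p.descFactorial k : ℕ) : ℂ) *
                ((q.descFactorial k : ℕ) : ℂ) * (u2 n u)^k)) *
            (r2poly n ^ k * (Apoly n u ^ (p-k) * Bpoly n u ^ (q-k))) := by
    rw [Finset.mul_sum]
    apply Finset.sum_congr rfl
    intro k hk
    rw [Finset.mem_range] at hk
    rw [clap_iter n u _ p q hpq k (by omega)]
    simp only [map_mul, map_pow]
    ring
  have hR : koorn n p q u = ∑ k ∈ Finset.range (p+1), ∑ j ∈ Finset.Ico k (p+1),
      C ((((n - 1 + p + q : ℕ) : ℂ) / ((n - 1 : ℕ) : ℂ) * (((q + n - 2).choose q : ℕ) : ℂ)) *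
          (((((p + n - 2).choose (p - j) : ℕ) : ℂ) * ((q.choose j : ℕ) : ℂ)) *
            ((-1:ℂ)^k * ((j.choose k : ℕ) : ℂ) * (u2 n u)^k))) *
        (r2poly n ^ k * (Apoly n u ^ (p-k) * Bpoly n u ^ (q-k))) := by
    calc koorn n p q u
        = ∑ j ∈ Finset.range (p+1), ∑ k ∈ Finset.range (j+1),
            C ((((n - 1 + p + q : ℕ) : ℂ) / ((n - 1 : ℕ) : ℂ) *
                  (((q + n - 2).choose q : ℕ) : ℂ)) *
                (((((p + n - 2).choose (p - j) : ℕ) : ℂ) * ((q.choose j : ℕ) : ℂ)) *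
                  ((-1:ℂ)^k * ((j.choose k : ℕ) : ℂ) * (u2 n u)^k))) *
              (r2poly n ^ k * (Apoly n u ^ (p-k) * Bpoly n u ^ (q-k))) := by
          rw [koorn, Finset.mul_sum]
          apply Finset.sum_congr rfl
          intro j hj
          rw [Finset.mem_range] at hj
          rw [sub_pow, ← Finset.sum_range_reflect]
          simp only [Nat.add_sub_cancel]
          rw [Finset.mul_sum, Finset.sum_mul, Finset.mul_sum]
          apply Finset.sum_congr rfl
          intro k hk
          rw [Finset.mem_range] at hk
          exact term_eq n u _ _ _ p q j k (by omega) (by omega) hpq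
      _ = _ := by
          apply Finset.sum_comm'
          intro x y
          simp only [Finset.mem_range, Finset.mem_Ico]
          omega
  rw [hR, hL]
  apply Finset.sum_congr rfl
  intro k hk
  rw [Finset.mem_range] at hk
  rw [← Finset.sum_mul, ← map_sum]
  congr 1
  congr 1
  have hs : (∑ j ∈ Finset.Ico k (p+1),
      ((((n - 1 + p + q : ℕ) : ℂ) / ((n - 1 : ℕ) : ℂ) * (((q + n - 2).choose q : ℕ) : ℂ)) *
        (((((p + n - 2).choose (p - j) : ℕ) : ℂ) * ((q.choose j : ℕ) : ℂ)) *
          ((-1:ℂ)^k * ((j.choose k : ℕ) : ℂ) * (u2 n u)^k))))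
      = (((q.choose k * (p+q+n-2-k).choose (p-k) : ℕ)) : ℂ) *
        ((((n - 1 + p + q : ℕ) : ℂ) / ((n - 1 : ℕ) : ℂ) * (((q + n - 2).choose q : ℕ) : ℂ)) *
          ((-1:ℂ)^k * (u2 n u)^k)) := by
    rw [← vand n p q k hn (by omega) hpq, Nat.cast_sum, Finset.sum_mul]
    apply Finset.sum_congr rfl
    intro j hj
    push_cast
    ring
  rw [hs]
  linear_combination (u2 n u)^k * key n p q k hn (by omega) hpq

end
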